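/- Let p, q be primes with q dividing (p^p-1)/(p-1), and let M in GL_p(F_p) have order q. Then the centraliser of M in GL_p(F_p) equals the group of units of the subalgebra F_p[M], and is cyclic of order p^p - 1. -/

import Mathlib

open Polynomial

set_option maxHeartbeats 1000000
set_option synthInstance.maxHeartbeats 400000

private lemma aux_exists_monic_irred {F : Type*} [Field F] {h : F[X]} (hm : h.Monic)
    (hu : ¬ IsUnit h) : ∃ f : F[X], Irreducible f ∧ f.Monic ∧ f ∣ h := by
  obtain ⟨f₀, hf₀, hdvd⟩ := WfDvdMonoid.exists_irreducible_factor hu hm.ne_zero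
  have hlc : f₀.leadingCoeff ≠ 0 := leadingCoeff_ne_zero.mpr hf₀.ne_zero
  have hunit : IsUnit (C f₀.leadingCoeff⁻¹) := isUnit_C.mpr (isUnit_iff_ne_zero.mpr (inv_ne_zero hlc))
  have hassoc : Associated f₀ (f₀ * C f₀.leadingCoeff⁻¹) := ⟨hunit.unit, by rw [IsUnit.unit_spec]⟩
  exact ⟨f₀ * C f₀.leadingCoeff⁻¹, hassoc.irreducible hf₀,
    monic_mul_leadingCoeff_inv hf₀.ne_zero, hassoc.symm.dvd.trans hdvd⟩

theorem stmt_7 (p q : ℕ) (hp : p.Prime) (hq : q.Prime)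
    (hdvd : q ∣ ∑ i ∈ Finset.range p, p ^ i)
    (M : GL (Fin p) (ZMod p)) (hM : orderOf M = q) :
    (∀ A : GL (Fin p) (ZMod p), A ∈ Subgroup.centralizer {M} ↔
        (A : Matrix (Fin p) (Fin p) (ZMod p)) ∈
          Algebra.adjoin (ZMod p) {(M : Matrix (Fin p) (Fin p) (ZMod p))}) ∧
      IsCyclic (Subgroup.centralizer {M}) ∧
      Nat.card (Subgroup.centralizer {M} : Subgroup (GL (Fin p) (ZMod p))) = p ^ p - 1 := by
  haveI : Fact p.Prime := ⟨hp⟩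
  haveI : Fact q.Prime := ⟨hq⟩
  haveI : NeZero p := ⟨hp.ne_zero⟩
  -- q ≠ p
  have hqp : q ≠ p := by
    intro hcon
    rw [hcon] at hdvd
    obtain ⟨n, hn⟩ : ∃ n, p = n + 1 := ⟨p - 1, by have := hp.pos; omega⟩
    rw [hn, Finset.sum_range_succ'] at hdvd
    simp only [pow_zero] at hdvd
    rw [← hn] at hdvd
    have h2 : p ∣ ∑ i ∈ Finset.range n, p ^ (i + 1) :=
      Finset.dvd_sum fun i _ => dvd_pow_self _ (Nat.succ_ne_zero i)
    have h3 : p ∣ 1 := (Nat.dvd_add_right h2).mp hdvd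
    have := Nat.le_of_dvd one_pos h3
    have := hp.one_lt
    omega
  set N : Matrix (Fin p) (Fin p) (ZMod p) := (M : Matrix (Fin p) (Fin p) (ZMod p)) with hN
  have hMq : N ^ q = 1 := by
    have h1 := pow_orderOf_eq_one M
    rw [hM] at h1
    rw [hN, ← Units.val_pow_eq_pow_val, h1, Units.val_one]
  have hMne : N ≠ 1 := by
    intro h
    have : M = 1 := Units.ext h
    rw [this, orderOf_one] at hM
    exact hq.one_lt.ne hM
  have hint : IsIntegral (ZMod p) N := Algebra.IsIntegral.isIntegral N
  set μ := minpoly (ZMod p) N with hμdef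
  have hdvd_iff : ∀ g : (ZMod p)[X], μ ∣ g ↔ aeval N g = 0 := fun g => by
    rw [hμdef, ← Polynomial.annIdealGenerator_eq_minpoly,
      ← Polynomial.mem_iff_annIdealGenerator_dvd, Polynomial.mem_annIdeal_iff_aeval_eq_zero]
  have hμ_monic : μ.Monic := minpoly.monic hint
  have hμ_dvd : μ ∣ X ^ q - 1 := (hdvd_iff _).2 (by
    rw [map_sub, map_one, aeval_X_pow, hMq, sub_self])
  have hμ_deg_le : μ.natDegree ≤ p := by
    have h1 := Matrix.minpoly_dvd_charpoly N
    have h2 : (Matrix.charpoly N).Monic := Matrix.charpoly_monic N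
    have h3 := Polynomial.natDegree_le_of_dvd h1 h2.ne_zero
    rwa [Matrix.charpoly_natDegree_eq_dim, Fintype.card_fin] at h3
  have hμ_ne : μ ≠ X - 1 := by
    intro h
    have h1 : aeval N (X - 1 : (ZMod p)[X]) = 0 := by
      rw [← h]; exact minpoly.aeval _ _
    rw [map_sub, aeval_X, map_one, sub_eq_zero] at h1
    exact hMne h1
  have hμ_pos : 0 < μ.natDegree := minpoly.natDegree_pos hint
  have hq0 : (q : ZMod p) ≠ 0 := by
    intro h
    rw [ZMod.natCast_eq_zero_iff] at h
    exact hqp ((Nat.prime_dvd_prime_iff_eq hp hq).mp h).symm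
  have hsq : Squarefree (X ^ q - 1 : (ZMod p)[X]) := by
    have h1 := Polynomial.separable_X_pow_sub_C (1 : ZMod p) hq0 one_ne_zero
    rw [map_one] at h1
    exact h1.squarefree
  obtain ⟨f, hf_irr, hf_monic, hf_dvd, hf_ne⟩ :
      ∃ f : (ZMod p)[X], Irreducible f ∧ f.Monic ∧ f ∣ μ ∧ f ≠ X - 1 := by
    have hμ_unit : ¬ IsUnit μ := by
      intro h
      have := Polynomial.natDegree_eq_zero_of_isUnit h
      omega
    obtain ⟨f, hfi, hfm, hfd⟩ := aux_exists_monic_irred hμ_monic hμ_unit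
    by_cases hfx : f = X - 1
    · subst hfx
      obtain ⟨g, hg⟩ := hfd
      have hgm : g.Monic := by
        have := hμ_monic
        rw [hg] at this
        exact hfm.of_mul_monic_left this
      have hgu : ¬ IsUnit g := by
        intro h
        have h1 : g = 1 := hgm.eq_one_of_isUnit h
        rw [h1, mul_one] at hg
        exact hμ_ne hg
      obtain ⟨f', hfi', hfm', hfd'⟩ := aux_exists_monic_irred hgm hgu
      refine ⟨f', hfi', hfm', ?_, ?_⟩
      · rw [hg]; exact Dvd.dvd.mul_left hfd' _
      · rintro rfl
        apply hfi.not_isUnit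
        apply hsq
        refine dvd_trans ?_ hμ_dvd
        rw [hg]
        exact mul_dvd_mul_left _ hfd'
    · exact ⟨f, hfi, hfm, hfd, hfx⟩
  set d := f.natDegree with hd
  have hd_pos : 0 < d := hf_irr.natDegree_pos
  have hd_le : d ≤ p :=
    le_trans (Polynomial.natDegree_le_of_dvd hf_dvd hμ_monic.ne_zero) hμ_deg_le
  haveI : Fact (Irreducible f) := ⟨hf_irr⟩
  have hf0 : f ≠ 0 := hf_irr.ne_zero
  haveI : Module.Finite (ZMod p) (AdjoinRoot f) :=
    Module.Finite.of_basis (AdjoinRoot.powerBasis hf0).basis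
  haveI : Finite (AdjoinRoot f) := Module.finite_of_finite (ZMod p)
  have hcardf : Nat.card (AdjoinRoot f) = p ^ d := by
    letI : Fintype (AdjoinRoot f) := Fintype.ofFinite _
    rw [Nat.card_eq_fintype_card, Module.card_eq_pow_finrank (K := ZMod p), ZMod.card,
      (AdjoinRoot.powerBasis hf0).finrank, AdjoinRoot.powerBasis_dim]
  set ζ := AdjoinRoot.root f with hζ
  have hζq : ζ ^ q = 1 := by
    have h0 : aeval ζ (X ^ q - 1 : (ZMod p)[X]) = 0 := by
      rw [AdjoinRoot.aeval_eq, AdjoinRoot.mk_eq_zero]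
      exact hf_dvd.trans hμ_dvd
    rwa [map_sub, aeval_X_pow, map_one, sub_eq_zero] at h0
  have hζ1 : ζ ≠ 1 := by
    intro h
    apply hf_ne
    have haev : aeval ζ f = 0 := by rw [AdjoinRoot.aeval_eq, AdjoinRoot.mk_self]
    rw [h] at haev
    have h1 : (algebraMap (ZMod p) (AdjoinRoot f)) (f.eval 1) = 0 := by
      rw [← haev, aeval_def, Polynomial.eval₂_at_one]
    have h2 : f.eval 1 = 0 := by
      have := (algebraMap (ZMod p) (AdjoinRoot f)).injective
      exact this (by rw [h1, map_zero])
    have h3 : (X - 1 : (ZMod p)[X]) ∣ f := by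
      have := (Polynomial.dvd_iff_isRoot (p := f) (a := (1 : ZMod p))).mpr h2
      rwa [map_one] at this
    obtain ⟨c, hc⟩ := h3
    rcases hf_irr.isUnit_or_isUnit hc with h4 | h4
    · exfalso
      have h5 := Polynomial.natDegree_eq_zero_of_isUnit h4
      have h6 : (X - 1 : (ZMod p)[X]).natDegree = 1 := by
        have := Polynomial.natDegree_X_sub_C (1 : ZMod p)
        rwa [map_one] at this
      omega
    · have hassoc : Associated (X - 1 : (ZMod p)[X]) f := ⟨h4.unit, by rw [IsUnit.unit_spec, ← hc]⟩
      have hm1 : (X - 1 : (ZMod p)[X]).Monic := by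
        have := Polynomial.monic_X_sub_C (1 : ZMod p)
        rwa [map_one] at this
      exact (Polynomial.eq_of_monic_of_associated hf_monic hm1 hassoc.symm)
  have hζu : IsUnit ζ := IsUnit.of_pow_eq_one hζq hq.ne_zero
  have horder : orderOf hζu.unit = q := by
    apply orderOf_eq_prime
    · exact Units.ext (by rw [Units.val_pow_eq_pow_val, IsUnit.unit_spec, hζq, Units.val_one])
    · intro h
      apply hζ1
      rw [← hζu.unit_spec, h, Units.val_one]
  have hq_dvd : q ∣ p ^ d - 1 := by
    have h1 := orderOf_dvd_natCard hζu.unit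
    rwa [horder, Nat.card_units, hcardf] at h1
  have hsum0 : ((∑ i ∈ Finset.range p, p ^ i : ℕ) : ZMod q) = 0 :=
    (ZMod.natCast_eq_zero_iff _ _).mpr hdvd
  have hpp : ((p : ZMod q)) ^ p = 1 := by
    have h2 := hsum0
    push_cast at h2
    have h3 := geom_sum_mul (p : ZMod q) p
    rw [h2, zero_mul] at h3
    exact sub_eq_zero.mp h3.symm
  have hpd : ((p : ZMod q)) ^ d = 1 := by
    have h1 : ((p ^ d - 1 : ℕ) : ZMod q) = 0 := (ZMod.natCast_eq_zero_iff _ _).mpr hq_dvd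
    have hge : 1 ≤ p ^ d := Nat.one_le_pow _ _ hp.pos
    rw [Nat.cast_sub hge] at h1
    push_cast at h1
    exact sub_eq_zero.mp h1
  have hr_ne1 : orderOf ((p : ZMod q)) ≠ 1 := by
    intro h
    have h1 : (p : ZMod q) = 1 := orderOf_eq_one_iff.mp h
    have h2 := hsum0
    push_cast at h2
    rw [h1] at h2
    simp only [one_pow, Finset.sum_const, Finset.card_range, nsmul_eq_mul, mul_one] at h2
    rw [h1] at h2
    exact one_ne_zero h2
  have hrp : orderOf ((p : ZMod q)) = p :=
    (hp.eq_one_or_self_of_dvd _ (orderOf_dvd_of_pow_eq_one hpp)).resolve_left hr_ne1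
  have hdp : d = p :=
    le_antisymm hd_le (by
      rw [← hrp]
      exact Nat.le_of_dvd hd_pos (orderOf_dvd_of_pow_eq_one hpd))
  have hμf : μ = f := by
    obtain ⟨c, hc⟩ := hf_dvd
    have hc0 : c ≠ 0 := by
      rintro rfl
      rw [mul_zero] at hc
      exact hμ_monic.ne_zero hc
    have hcm : c.Monic := by
      have := hμ_monic
      rw [hc] at this
      exact hf_monic.of_mul_monic_left this
    have hdeg : μ.natDegree = f.natDegree + c.natDegree := by
      rw [hc, Polynomial.natDegree_mul hf0 hc0]
    have hcdeg : c.natDegree = 0 := by omega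
    have hc1 : c = 1 := hcm.natDegree_eq_zero.mp hcdeg
    rw [hc, hc1, mul_one]
  have hμ_irr : Irreducible μ := hμf ▸ hf_irr
  have hμ_deg : μ.natDegree = p := by rw [hμf, ← hd, hdp]
  -- Part 2: the algebra K = F_p[M]
  haveI : Fact (Irreducible μ) := ⟨hμ_irr⟩
  have hker : ∀ a ∈ Ideal.span ({μ} : Set (ZMod p)[X]), (aeval N).toRingHom a = 0 := by
    intro a ha
    rw [Ideal.mem_span_singleton] at ha
    exact (hdvd_iff a).1 ha
  let φ : AdjoinRoot μ →+* Matrix (Fin p) (Fin p) (ZMod p) :=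
    Ideal.Quotient.lift (Ideal.span {μ}) (aeval N).toRingHom hker
  have hφ_mk : ∀ g : (ZMod p)[X], φ (AdjoinRoot.mk μ g) = aeval N g := fun g =>
    Ideal.Quotient.lift_mk _ _ _
  haveI : Nonempty (Fin p) := ⟨⟨0, hp.pos⟩⟩
  have hφ_inj : Function.Injective φ := φ.injective
  have hφ_mem : ∀ k, φ k ∈ Algebra.adjoin (ZMod p) {N} := by
    intro k
    obtain ⟨g, rfl⟩ := AdjoinRoot.mk_surjective k
    rw [hφ_mk, Algebra.adjoin_singleton_eq_range_aeval]
    exact ⟨g, rfl⟩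
  have hφ_surj : ∀ x ∈ Algebra.adjoin (ZMod p) {N}, ∃ k, φ k = x := by
    intro x hx
    rw [Algebra.adjoin_singleton_eq_range_aeval] at hx
    obtain ⟨g, hg⟩ := hx
    exact ⟨AdjoinRoot.mk μ g, by rw [hφ_mk]; exact hg⟩
  have hcomm2 : ∀ B : Matrix (Fin p) (Fin p) (ZMod p), Commute B N → ∀ k, Commute B (φ k) := by
    intro B hB k
    obtain ⟨g, rfl⟩ := AdjoinRoot.mk_surjective k
    rw [hφ_mk]
    induction g using Polynomial.induction_on' with
    | add u v hu hv => rw [map_add]; exact hu.add_right hv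
    | monomial n a =>
      rw [aeval_monomial]
      exact (Commute.mul_right ((Algebra.commutes a B).symm) (hB.pow_right n))
  have hcomm : ∀ k, Commute (φ k) N := by
    intro k
    obtain ⟨g, rfl⟩ := AdjoinRoot.mk_surjective k
    rw [hφ_mk]
    induction g using Polynomial.induction_on' with
    | add u v hu hv => rw [map_add]; exact hu.add_left hv
    | monomial n a =>
      rw [aeval_monomial]
      exact (Commute.mul_left (Algebra.commutes a N) ((Commute.refl N).pow_left n))
  haveI : Module.Finite (ZMod p) (AdjoinRoot μ) :=
    Module.Finite.of_basis (AdjoinRoot.powerBasis hμ_irr.ne_zero).basis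
  haveI : Finite (AdjoinRoot μ) := Module.finite_of_finite (ZMod p)
  have hcardK : Nat.card (AdjoinRoot μ) = p ^ p := by
    letI : Fintype (AdjoinRoot μ) := Fintype.ofFinite _
    rw [Nat.card_eq_fintype_card, Module.card_eq_pow_finrank (K := ZMod p), ZMod.card,
      (AdjoinRoot.powerBasis hμ_irr.ne_zero).finrank, AdjoinRoot.powerBasis_dim, hμ_deg]
  have hfinrankK : Module.finrank (ZMod p) (AdjoinRoot μ) = p := by
    rw [(AdjoinRoot.powerBasis hμ_irr.ne_zero).finrank, AdjoinRoot.powerBasis_dim, hμ_deg]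
  obtain ⟨v₀, hv₀⟩ : ∃ v : Fin p → ZMod p, v ≠ 0 := exists_ne 0
  let θ : AdjoinRoot μ →ₗ[ZMod p] (Fin p → ZMod p) :=
    { toFun := fun k => (φ k).mulVec v₀
      map_add' := fun x y => by
        show (φ (x + y)).mulVec v₀ = (φ x).mulVec v₀ + (φ y).mulVec v₀
        rw [φ.map_add, Matrix.add_mulVec]
      map_smul' := fun a k => by
        show (φ (a • k)).mulVec v₀ = (RingHom.id (ZMod p)) a • (φ k).mulVec v₀
        obtain ⟨g, rfl⟩ := AdjoinRoot.mk_surjective k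
        have h1 : φ (a • AdjoinRoot.mk μ g) = a • φ (AdjoinRoot.mk μ g) := by
          rw [AdjoinRoot.smul_mk, hφ_mk, hφ_mk, Polynomial.smul_eq_C_mul, map_mul, aeval_C,
            Algebra.smul_def]
        rw [RingHom.id_apply, h1, Matrix.smul_mulVec] }
  have hθ_inj : Function.Injective θ := by
    rw [injective_iff_map_eq_zero]
    intro k hk
    by_contra hk0
    have hv : v₀ = 0 := by
      have hkk : (φ k).mulVec v₀ = 0 := hk
      calc v₀ = (1 : Matrix (Fin p) (Fin p) (ZMod p)).mulVec v₀ := (Matrix.one_mulVec v₀).symm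
        _ = (φ (k⁻¹ * k)).mulVec v₀ := by rw [inv_mul_cancel₀ hk0, φ.map_one]
        _ = (φ k⁻¹).mulVec ((φ k).mulVec v₀) := by rw [φ.map_mul, Matrix.mulVec_mulVec]
        _ = 0 := by rw [hkk, Matrix.mulVec_zero]
    exact hv₀ hv
  have hθ_surj : Function.Surjective θ :=
    (LinearMap.injective_iff_surjective_of_finrank_eq_finrank
      (by rw [hfinrankK, Module.finrank_pi, Fintype.card_fin])).mp hθ_inj
  have hθ_apply : ∀ k, θ k = (φ k).mulVec v₀ := fun _ => rfl
  have hmain : ∀ B : Matrix (Fin p) (Fin p) (ZMod p), Commute B N → ∃ k, φ k = B := by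
    intro B hB
    obtain ⟨k₀, hk₀⟩ := hθ_surj (B.mulVec v₀)
    rw [hθ_apply] at hk₀
    refine ⟨k₀, ?_⟩
    have hvec : ∀ v, (φ k₀).mulVec v = B.mulVec v := by
      intro v
      obtain ⟨c, hc⟩ := hθ_surj v
      rw [hθ_apply] at hc
      have hBc : B * φ c = φ c * B := hcomm2 B hB c
      calc (φ k₀).mulVec v = (φ k₀).mulVec ((φ c).mulVec v₀) := by rw [hc]
        _ = (φ k₀ * φ c).mulVec v₀ := Matrix.mulVec_mulVec _ _ _
        _ = (φ c * φ k₀).mulVec v₀ := by rw [← φ.map_mul, ← φ.map_mul, mul_comm]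
        _ = (φ c).mulVec ((φ k₀).mulVec v₀) := (Matrix.mulVec_mulVec _ _ _).symm
        _ = (φ c).mulVec (B.mulVec v₀) := by rw [hk₀]
        _ = (φ c * B).mulVec v₀ := Matrix.mulVec_mulVec _ _ _
        _ = (B * φ c).mulVec v₀ := by rw [hBc]
        _ = B.mulVec ((φ c).mulVec v₀) := (Matrix.mulVec_mulVec _ _ _).symm
        _ = B.mulVec v := by rw [hc]
    ext i j
    have h1 := congrFun (hvec (Pi.single j 1)) i
    simp only [Matrix.mulVec_single, MulOpposite.op_one, one_smul] at h1
    exact h1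
  have hA_iff : ∀ A : GL (Fin p) (ZMod p), A ∈ Subgroup.centralizer {M} ↔
      Commute (A : Matrix (Fin p) (Fin p) (ZMod p)) N := by
    intro A
    rw [Subgroup.mem_centralizer_iff]
    constructor
    · intro h
      have h2 := congrArg Units.val (h M rfl)
      rw [Units.val_mul, Units.val_mul] at h2
      exact h2.symm
    · intro h g hg
      rw [Set.mem_singleton_iff] at hg
      subst hg
      exact Units.ext (by rw [Units.val_mul, Units.val_mul]; exact h.symm)
  have parta : ∀ A : GL (Fin p) (ZMod p), A ∈ Subgroup.centralizer {M} ↔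
      (A : Matrix (Fin p) (Fin p) (ZMod p)) ∈ Algebra.adjoin (ZMod p) {N} := by
    intro A
    rw [hA_iff]
    constructor
    · intro h
      obtain ⟨k, hk⟩ := hmain _ h
      rw [← hk]
      exact hφ_mem k
    · intro h
      obtain ⟨k, hk⟩ := hφ_surj _ h
      rw [← hk]
      exact hcomm k
  let Φ : (AdjoinRoot μ)ˣ →* GL (Fin p) (ZMod p) := Units.map (φ : AdjoinRoot μ →* _)
  have hΦ_range : Φ.range = Subgroup.centralizer {M} := by
    ext A
    rw [MonoidHom.mem_range, hA_iff]
    constructor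
    · rintro ⟨u, rfl⟩
      exact hcomm u
    · intro hA
      obtain ⟨k, hk⟩ := hmain _ hA
      have hk0 : k ≠ 0 := by
        rintro rfl
        rw [φ.map_zero] at hk
        exact Units.ne_zero A hk.symm
      exact ⟨Units.mk0 k hk0, Units.ext hk⟩
  have hφinj_units : Function.Injective Φ := Units.map_injective hφ_inj
  let e : (AdjoinRoot μ)ˣ ≃* Subgroup.centralizer {M} :=
    (MonoidHom.ofInjective hφinj_units).trans (MulEquiv.subgroupCongr hΦ_range)
  refine ⟨parta, isCyclic_of_surjective e.toMonoidHom e.surjective, ?_⟩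
  calc Nat.card (Subgroup.centralizer {M} : Subgroup (GL (Fin p) (ZMod p)))
      = Nat.card (AdjoinRoot μ)ˣ := (Nat.card_congr e.toEquiv).symm
    _ = Nat.card (AdjoinRoot μ) - 1 := Nat.card_units _
    _ = p ^ p - 1 := by rw [hcardK]
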